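/- Let T be an ℝ-tree with an action of the free group F_N (N ≥ 2) by isometries. The action is indecomposable if and only if there is no transverse family for the action. -/

import Mathlib

open Pointwise MeasureTheory

noncomputable section

/-! ### The free group, its boundary, and the action on the boundary -/

/-- The free group of rank `N` with fixed basis `Fin N`. -/
abbrev FN (N : ℕ) := FreeGroup (Fin N)

/-- A letter: a basis element together with a sign (`true` = positive). -/
abbrev Letter (N : ℕ) := Fin N × Bool

/-- An infinite word is reduced if no letter is followed by its inverse. -/
def IsReducedWord {N : ℕ} (X : ℕ → Letter N) : Prop :=
  ∀ n, X (n + 1) ≠ ((X n).1, !(X n).2)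

/-- The Gromov boundary `∂F_N`: infinite reduced words in the basis and its inverses,
topologized as a subspace of the product. -/
abbrev Bd (N : ℕ) := {X : ℕ → Letter N // IsReducedWord X}

/-- Prepend a letter to an infinite word, performing the (single possible) cancellation. -/
def consWord {N : ℕ} (l : Letter N) (X : ℕ → Letter N) : ℕ → Letter N
  | 0 => l
  | n + 1 => X n

def prependLetter {N : ℕ} (l : Letter N) (X : ℕ → Letter N) : ℕ → Letter N :=
  if X 0 = (l.1, !l.2) then fun n => X (n + 1) else consWord l X

lemma prependLetter_reduced {N : ℕ} (l : Letter N) {X : ℕ → Letter N}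
    (hX : IsReducedWord X) : IsReducedWord (prependLetter l X) := by
  unfold prependLetter
  split_ifs with h
  · intro n
    exact hX (n + 1)
  · intro n
    cases n with
    | zero => exact h
    | succ m => exact hX m

lemma prependLetter_injOn {N : ℕ} (l : Letter N) {X Y : ℕ → Letter N}
    (hX : IsReducedWord X) (hY : IsReducedWord Y)
    (h : prependLetter l X = prependLetter l Y) : X = Y := by
  unfold prependLetter at h
  split_ifs at h with h1 h2 h2
  · funext n
    cases n with
    | zero => rw [h1, h2]
    | succ m => exact congrFun h m
  · exfalso
    have h0 : X 1 = l := congrFun h 0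
    have hr := hX 0
    rw [h1] at hr
    simp only [Bool.not_not] at hr
    exact hr (by rw [h0])
  · exfalso
    have h0 : Y 1 = l := (congrFun h 0).symm
    have hr := hY 0
    rw [h2] at hr
    simp only [Bool.not_not] at hr
    exact hr (by rw [h0])
  · funext n
    exact congrFun h (n + 1)

/-- Act on an infinite reduced word by a finite word (a list of letters),
multiplying on the left and reducing. -/
def wordActFun {N : ℕ} (w : List (Letter N)) (X : ℕ → Letter N) : ℕ → Letter N :=
  w.foldr prependLetter X

lemma wordActFun_reduced {N : ℕ} (w : List (Letter N)) {X : ℕ → Letter N}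
    (hX : IsReducedWord X) : IsReducedWord (wordActFun w X) := by
  induction w with
  | nil => exact hX
  | cons l w ih => exact prependLetter_reduced l ih

lemma wordActFun_injOn {N : ℕ} (w : List (Letter N)) {X Y : ℕ → Letter N}
    (hX : IsReducedWord X) (hY : IsReducedWord Y)
    (h : wordActFun w X = wordActFun w Y) : X = Y := by
  induction w with
  | nil => exact h
  | cons l w ih =>
      exact ih (prependLetter_injOn l (wordActFun_reduced w hX) (wordActFun_reduced w hY) h)

/-- The action of `F_N` on its boundary: left multiplication followed by reduction. -/
def bAct {N : ℕ} (g : FN N) (X : Bd N) : Bd N :=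
  ⟨wordActFun (FreeGroup.toWord g) X.1, wordActFun_reduced _ X.2⟩

lemma bAct_injective {N : ℕ} (g : FN N) : Function.Injective (bAct (N := N) g) := by
  intro X Y h
  exact Subtype.ext (wordActFun_injOn _ X.2 Y.2 (congrArg Subtype.val h))

/-- The diagonal action of `F_N` on `∂F_N × ∂F_N`. -/
def leafAct {N : ℕ} (g : FN N) (p : Bd N × Bd N) : Bd N × Bd N :=
  (bAct g p.1, bAct g p.2)

/-- `X` is the limit in `∂F_N` of the reduced words of `g ^ n` as `n → ∞`. -/
def limitsTo {N : ℕ} (g : FN N) (X : Bd N) : Prop :=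
  ∀ k : ℕ, ∃ n₀ : ℕ, ∀ n ≥ n₀, ∀ i < k, (FreeGroup.toWord (g ^ n))[i]? = some (X.1 i)

/-! ### Laminations -/

/-- A lamination: a non-empty, closed (in `∂²F_N`, i.e. relatively closed in the
complement of the diagonal), `F_N`-invariant and flip-invariant set of pairs of
distinct boundary points. -/
def IsLamination {N : ℕ} (L : Set (Bd N × Bd N)) : Prop :=
  L.Nonempty ∧ (∀ p ∈ L, p.1 ≠ p.2) ∧
  (∃ C : Set (Bd N × Bd N), IsClosed C ∧ L = C ∩ {p | p.1 ≠ p.2}) ∧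
  (∀ g : FN N, ∀ p ∈ L, leafAct g p ∈ L) ∧
  (∀ p ∈ L, (p.2, p.1) ∈ L)

/-- A minimal lamination: one containing no proper sublamination. -/
def IsMinimalLamination {N : ℕ} (L : Set (Bd N × Bd N)) : Prop :=
  IsLamination L ∧ ∀ L' : Set (Bd N × Bd N), IsLamination L' → L' ⊆ L → L' = L

/-- The derived set of a set of leaves: its non-isolated points. -/
def derivedOf {N : ℕ} (L : Set (Bd N × Bd N)) : Set (Bd N × Bd N) :=
  {p ∈ L | p ∈ closure (L \ {p})}

/-- A leaf `l` is diagonal over `L0` if `l = (X_1, X_n)` for a finite chain of leaves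
`(X_1, X_2), (X_2, X_3), …, (X_{n-1}, X_n)` in `L0`. -/
def IsDiagonalOver {N : ℕ} (L0 : Set (Bd N × Bd N)) (l : Bd N × Bd N) : Prop :=
  ∃ (n : ℕ) (X : Fin (n + 2) → Bd N),
    l = (X 0, X (Fin.last (n + 1))) ∧
    ∀ i : Fin (n + 1), (X i.castSucc, X i.succ) ∈ L0

/-- The `F_N`-orbit of a leaf. -/
def leafOrbit {N : ℕ} (p : Bd N × Bd N) : Set (Bd N × Bd N) :=
  {q | ∃ g : FN N, q = leafAct g p}

/-- A lamination `L` is minimal up to diagonal leaves if it contains a unique minimal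
sublamination `L0`, and `L \ L0` consists of finitely many `F_N`-orbits of leaves,
each of which is diagonal over `L0`. -/
def IsMinimalUpToDiagonal {N : ℕ} (L : Set (Bd N × Bd N)) : Prop :=
  ∃ L0 : Set (Bd N × Bd N),
    (IsMinimalLamination L0 ∧ L0 ⊆ L) ∧
    (∀ L1 : Set (Bd N × Bd N), IsMinimalLamination L1 → L1 ⊆ L → L1 = L0) ∧
    (∃ P : Set (Bd N × Bd N), P.Finite ∧ L \ L0 = ⋃ p ∈ P, leafOrbit p) ∧
    (∀ l ∈ L \ L0, IsDiagonalOver L0 l)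

/-! ### ℝ-trees and actions on them -/

/-- The metric segment between two points; in an ℝ-tree this is the unique arc
joining them. -/
def seg {T : Type*} [MetricSpace T] (x y : T) : Set T :=
  {z | dist x z + dist z y = dist x y}

/-- An ℝ-tree: any two points are joined by an arc isometric to a real interval,
and topological arcs between two given points are unique. -/
structure IsRTree (T : Type*) [MetricSpace T] : Prop where
  geodesic : ∀ x y : T, ∃ f : ℝ → T, f 0 = x ∧ f (dist x y) = y ∧
    ∀ s ∈ Set.Icc (0 : ℝ) (dist x y), ∀ t ∈ Set.Icc (0 : ℝ) (dist x y),
      dist (f s) (f t) = |s - t|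
  unique_arc : ∀ x y : T, x ≠ y → ∀ f g : ℝ → T,
    ContinuousOn f (Set.Icc (0 : ℝ) 1) → Set.InjOn f (Set.Icc (0 : ℝ) 1) →
    ContinuousOn g (Set.Icc (0 : ℝ) 1) → Set.InjOn g (Set.Icc (0 : ℝ) 1) →
    f 0 = x → f 1 = y → g 0 = x → g 1 = y →
    f '' Set.Icc (0 : ℝ) 1 = g '' Set.Icc (0 : ℝ) 1

/-- A non-degenerate segment (arc) of `T`. -/
def IsNondegSeg {T : Type*} [MetricSpace T] (I : Set T) : Prop :=
  ∃ x y : T, x ≠ y ∧ I = seg x y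

/-- A subtree: a non-empty convex subset. -/
def IsSubtree {T : Type*} [MetricSpace T] (S : Set T) : Prop :=
  S.Nonempty ∧ ∀ x ∈ S, ∀ y ∈ S, seg x y ⊆ S

section TreeAction

variable (N : ℕ) (T : Type*) [MetricSpace T] [MulAction (FN N) T]

/-- The action is by isometries. -/
def IsIsometricAction : Prop :=
  ∀ g : FN N, Isometry (fun x : T => g • x)

/-- The translation length of `g`. -/
def translationLength (g : FN N) : ℝ :=
  ⨅ x : T, dist x (g • x)

/-- The action is free: every non-trivial element has positive translation length. -/
def IsFreeAction : Prop :=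
  ∀ g : FN N, g ≠ 1 → 0 < translationLength N T g

/-- Minimality: `T` has no non-empty proper invariant subtree. -/
def IsMinimalAction : Prop :=
  ∀ S : Set T, S.Nonempty → (∀ x ∈ S, ∀ y ∈ S, seg x y ⊆ S) →
    (∀ g : FN N, ∀ x ∈ S, g • x ∈ S) → S = Set.univ

/-- Dense orbits. -/
def HasDenseOrbits : Prop :=
  ∀ x : T, Dense (MulAction.orbit (FN N) x)

/-- Mixing. -/
def IsMixing : Prop :=
  ∀ I J : Set T, IsNondegSeg I → IsNondegSeg J →
    ∃ (n : ℕ) (u : Fin (n + 1) → FN N), I ⊆ ⋃ i, u i • J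

/-- Indecomposability. -/
def IsIndecomposable : Prop :=
  ∀ I J : Set T, IsNondegSeg I → IsNondegSeg J →
    ∃ (n : ℕ) (u : Fin (n + 1) → FN N),
      (I ⊆ ⋃ i, u i • J) ∧
      ∀ i : Fin n, IsNondegSeg (u i.castSucc • J ∩ u i.succ • J)

/-- The action has arc-dense directions. -/
def HasArcDenseDirections : Prop :=
  ∀ x y : T, y ≠ x → ∀ I : Set T, IsNondegSeg I →
    ∃ g : FN N, g • x ∈ I ∧ (g • connectedComponentIn {x}ᶜ y ∩ I).Nontrivial

/-- A transverse family for the action. -/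
def IsTransverseFamily (𝒯 : Set (Set T)) : Prop :=
  𝒯.Nonempty ∧
  (∀ S ∈ 𝒯, IsSubtree S ∧ S.Nontrivial ∧ S ≠ Set.univ) ∧
  (∀ g : FN N, ∀ S ∈ 𝒯, g • S ∈ 𝒯) ∧
  (∀ S ∈ 𝒯, ∀ S' ∈ 𝒯, S ≠ S' → (S ∩ S').Subsingleton)

/-- Leaves `(g^{-∞}, g^{∞})` of elements of translation length `< ε`. -/
def smallLeaves (ε : ℝ) : Set (Bd N × Bd N) :=
  {p | ∃ g : FN N, g ≠ 1 ∧ translationLength N T g < ε ∧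
    limitsTo g⁻¹ p.1 ∧ limitsTo g p.2}

/-- The dual lamination `L(T)` of a tree with dense orbits. -/
def dualLamination : Set (Bd N × Bd N) :=
  {p | p.1 ≠ p.2} ∩ ⋂ ε ∈ Set.Ioi (0 : ℝ), closure (smallLeaves N T ε)

/-- A maximal cyclic subgroup. -/
def IsMaximalCyclic {G : Type*} [Group G] (H : Subgroup G) : Prop :=
  (∃ g : G, H = Subgroup.zpowers g) ∧
  ∀ g : G, H ≤ Subgroup.zpowers g → H = Subgroup.zpowers g

/-- A very small action: minimal, stabilizers of non-degenerate arcs are trivial or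
maximal cyclic, and stabilizers of tripods are trivial. -/
def IsVerySmallAction : Prop :=
  IsMinimalAction N T ∧
  (∀ I : Set T, IsNondegSeg I →
    MulAction.stabilizer (FN N) I = ⊥ ∨ IsMaximalCyclic (MulAction.stabilizer (FN N) I)) ∧
  (∀ x y z : T, x ∉ seg y z → y ∉ seg x z → z ∉ seg x y →
    MulAction.stabilizer (FN N) (seg x y ∪ seg y z ∪ seg z x) = ⊥)

/-- The set of directions at a point: connected components of `T ∖ {x}`. -/
def directionsAt (x : T) : Set (Set T) :=
  {d | ∃ y : T, y ≠ x ∧ d = connectedComponentIn {x}ᶜ y}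

/-- The set of `Stab(x)`-orbits of directions at `x`. -/
def dirOrbitsAt (x : T) : Set (Set (Set T)) :=
  {D | ∃ d ∈ directionsAt T x,
    D = {d' | ∃ g ∈ MulAction.stabilizer (FN N) x, d' = g • d}}

end TreeAction

/-- The rank of a subgroup: the minimal size of a finite generating set. -/
def subgroupRank {G : Type*} [Group G] (H : Subgroup G) : ℕ :=
  sInf {n | ∃ s : Finset G, s.card = n ∧ Subgroup.closure (s : Set G) = H}

/-! ### Free factors and boundaries of subgroups -/

/-- `H` is a free factor of `F_N`: there is `K` such that the natural map
`H ∗ K → F_N` is an isomorphism. -/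
def IsFreeFactor {N : ℕ} (H : Subgroup (FN N)) : Prop :=
  ∃ K : Subgroup (FN N),
    Function.Bijective (Monoid.Coprod.lift H.subtype K.subtype)

/-- The boundary `∂H ⊆ ∂F_N` of a subgroup `H`: points `X` such that elements of `H`
have arbitrarily long common prefixes with `X`. -/
def boundaryOf {N : ℕ} (H : Subgroup (FN N)) : Set (Bd N) :=
  {X | ∀ k : ℕ, ∃ h ∈ H, ∀ i < k, (FreeGroup.toWord h)[i]? = some (X.1 i)}

/-- A leaf is carried by `H` if both its endpoints lie in `∂H`. -/
def IsCarriedBy {N : ℕ} (H : Subgroup (FN N)) (p : Bd N × Bd N) : Prop :=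
  p.1 ∈ boundaryOf H ∧ p.2 ∈ boundaryOf H

/-! ### Currents -/

/-- `∂²F_N`, as a type. -/
abbrev DBd (N : ℕ) := {p : Bd N × Bd N // p.1 ≠ p.2}

instance (N : ℕ) : MeasurableSpace (DBd N) := borel _

instance (N : ℕ) : BorelSpace (DBd N) := ⟨rfl⟩

/-- The flip on `∂²F_N`. -/
def dbFlip {N : ℕ} (p : DBd N) : DBd N :=
  ⟨(p.1.2, p.1.1), fun h => p.2 h.symm⟩

/-- The `F_N`-action on `∂²F_N`. -/
def dbAct {N : ℕ} (g : FN N) (p : DBd N) : DBd N :=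
  ⟨(bAct g p.1.1, bAct g p.1.2), fun h => p.2 (bAct_injective g h)⟩

/-- The topological support of a measure. -/
def measSupport {X : Type*} [TopologicalSpace X] [MeasurableSpace X]
    (μ : Measure X) : Set X :=
  {x | ∀ U : Set X, IsOpen U → x ∈ U → μ U ≠ 0}

end

section RTree
open Set
/-! ### basics -/
section RT
variable {T : Type*} [MetricSpace T]

lemma seg_comm (x y : T) : seg x y = seg y x := by
  ext z; simp only [seg, mem_setOf_eq, dist_comm x z, dist_comm z y, dist_comm x y]
  constructor <;> intro h <;> linarith

lemma left_mem_seg (x y : T) : x ∈ seg x y := by simp [seg]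

lemma right_mem_seg (x y : T) : y ∈ seg x y := by simp [seg]

lemma seg_self (x : T) : seg x x = {x} := by
  ext z
  simp only [seg, mem_setOf_eq, dist_self, mem_singleton_iff]
  constructor
  · intro h
    rw [dist_comm z x] at h
    have h1 : dist x z = 0 := by linarith [dist_nonneg (x := x) (y := z)]
    exact (dist_eq_zero.1 h1).symm
  · rintro rfl; simp

/-- `f` is a geodesic parametrization from `x` to `y`. -/
def IsGeo (x y : T) (f : ℝ → T) : Prop :=
  f 0 = x ∧ f (dist x y) = y ∧
    ∀ s ∈ Icc (0:ℝ) (dist x y), ∀ t ∈ Icc (0:ℝ) (dist x y), dist (f s) (f t) = |s - t|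

lemma IsRTree.exists_geo (h : IsRTree T) (x y : T) : ∃ f, IsGeo x y f := h.geodesic x y

lemma IsGeo.continuousOn {x y : T} {f : ℝ → T} (hf : IsGeo x y f) :
    ContinuousOn f (Icc 0 (dist x y)) := by
  apply LipschitzOnWith.continuousOn (K := 1)
  apply LipschitzOnWith.of_dist_le_mul
  intro s hs t ht
  rw [hf.2.2 s hs t ht]
  simp [Real.dist_eq]

lemma IsGeo.injOn {x y : T} {f : ℝ → T} (hf : IsGeo x y f) :
    InjOn f (Icc 0 (dist x y)) := by
  intro s hs t ht h
  have := hf.2.2 s hs t ht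
  rw [h, dist_self] at this
  have := abs_eq_zero.1 this.symm
  linarith

lemma IsGeo.image_subset_seg {x y : T} {f : ℝ → T} (hf : IsGeo x y f) :
    f '' Icc 0 (dist x y) ⊆ seg x y := by
  rintro _ ⟨t, ht, rfl⟩
  have h0 : (0:ℝ) ∈ Icc 0 (dist x y) := ⟨le_refl _, dist_nonneg⟩
  have hd : dist x y ∈ Icc (0:ℝ) (dist x y) := ⟨dist_nonneg, le_refl _⟩
  have h1 : dist x (f t) = t := by
    have := hf.2.2 0 h0 t ht
    rw [hf.1] at this
    rw [this, abs_of_nonpos (by linarith [ht.1])]; ring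
  have h2 : dist (f t) y = dist x y - t := by
    have := hf.2.2 t ht _ hd
    rw [hf.2.1] at this
    rw [this, abs_of_nonpos (by linarith [ht.2])]; ring
  simp only [seg, mem_setOf_eq, h1, h2]; ring

/-- rescaled map for unique_arc -/
private lemma scale_image {f : ℝ → T} {L : ℝ} (hL : 0 < L) :
    (fun u : ℝ => f (u * L)) '' Icc 0 1 = f '' Icc 0 L := by
  ext z; constructor
  · rintro ⟨u, hu, rfl⟩
    exact ⟨u * L, ⟨mul_nonneg hu.1 hL.le, by nlinarith [hu.2]⟩, rfl⟩
  · rintro ⟨t, ht, rfl⟩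
    refine ⟨t / L, ⟨div_nonneg ht.1 hL.le, (div_le_one hL).2 ht.2⟩, ?_⟩
    show f (t / L * L) = f t
    rw [div_mul_cancel₀ _ hL.ne']

/-- Any geodesic image equals the metric segment. -/
lemma IsGeo.seg_eq (htree : IsRTree T) {x y : T} {f : ℝ → T} (hf : IsGeo x y f) :
    seg x y = f '' Icc 0 (dist x y) := by
  apply Subset.antisymm _ hf.image_subset_seg
  intro z hz
  rcases eq_or_ne x y with rfl | hxy
  · rw [seg_self] at hz
    exact ⟨0, ⟨le_refl _, dist_nonneg⟩, by rw [hf.1, hz]⟩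
  -- build concatenated geodesic through z
  set L := dist x y with hLdef
  have hL : 0 < L := dist_pos.2 hxy
  obtain ⟨f1, hf1⟩ := htree.exists_geo x z
  obtain ⟨f2, hf2⟩ := htree.exists_geo z y
  set A := dist x z with hA
  set B := dist z y with hB
  have hAB : A + B = L := hz
  set h : ℝ → T := fun t => if t ≤ A then f1 t else f2 (t - A) with hh
  have hA0 : 0 ≤ A := dist_nonneg
  have hB0 : 0 ≤ B := dist_nonneg
  have hf1z : f1 A = z := hf1.2.1
  have hf2z : f2 0 = z := hf2.1
  have h0 : h 0 = x := by simp only [hh, if_pos hA0]; exact hf1.1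
  have hLval : h L = y := by
    simp only [hh]
    rcases le_or_gt L A with hc | hc
    · have hBA : B = 0 := by linarith
      have hLA : L = A := by linarith
      rw [if_pos hc, hLA, hf1z]
      rw [hB] at hBA
      exact dist_eq_zero.1 hBA
    · rw [if_neg (not_le.2 hc)]
      have : L - A = B := by linarith
      rw [this]; exact hf2.2.1
  -- distance identity for s ≤ t
  have key : ∀ s t : ℝ, 0 ≤ s → s ≤ t → t ≤ L → dist (h s) (h t) = t - s := by
    intro s t hs hst htL
    rcases le_or_gt t A with hc | hc
    · simp only [hh, if_pos hc, if_pos (le_trans hst hc)]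
      rw [hf1.2.2 s ⟨hs, by linarith⟩ t ⟨by linarith, hc⟩]
      rw [abs_of_nonpos (by linarith)]; ring
    · rcases le_or_gt s A with hc2 | hc2
      · simp only [hh, if_pos hc2, if_neg (not_le.2 hc)]
        have d1 : dist (f1 s) z = A - s := by
          have := hf1.2.2 s ⟨hs, by linarith⟩ A ⟨hA0, le_refl _⟩
          rw [hf1z] at this
          rw [this, abs_of_nonpos (by linarith)]; ring
        have d2 : dist z (f2 (t - A)) = t - A := by
          have := hf2.2.2 0 ⟨le_refl _, hB0⟩ (t - A) ⟨by linarith, by linarith⟩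
          rw [hf2z] at this
          rw [this, abs_of_nonpos (by linarith)]; ring
        have hub : dist (f1 s) (f2 (t - A)) ≤ t - s := by
          calc dist (f1 s) (f2 (t - A)) ≤ dist (f1 s) z + dist z (f2 (t - A)) :=
                dist_triangle _ _ _
            _ = (A - s) + (t - A) := by rw [d1, d2]
            _ = t - s := by ring
        have hlb : t - s ≤ dist (f1 s) (f2 (t - A)) := by
          have hxy' : dist x y ≤ dist x (f1 s) + dist (f1 s) (f2 (t - A)) + dist (f2 (t - A)) y := by
            calc dist x y ≤ dist x (f1 s) + dist (f1 s) y := dist_triangle _ _ _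
              _ ≤ dist x (f1 s) + (dist (f1 s) (f2 (t - A)) + dist (f2 (t - A)) y) := by
                  linarith [dist_triangle (f1 s) (f2 (t - A)) y]
              _ = _ := by ring
          have e1 : dist x (f1 s) = s := by
            rw [← hf1.1, hf1.2.2 0 ⟨le_refl _, hA0⟩ s ⟨hs, by linarith⟩]
            rw [abs_of_nonpos (by linarith)]; ring
          have e2 : dist (f2 (t - A)) y = B - (t - A) := by
            rw [← hf2.2.1, hf2.2.2 (t - A) ⟨by linarith, by linarith⟩ B ⟨hB0, le_refl _⟩]
            rw [abs_of_nonpos (by linarith)]; ring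
          rw [e1, e2] at hxy'
          linarith [hxy']
        first
          | linarith
          | (simp only [hh, if_pos hc2, if_neg (not_le.2 hc)]; linarith)
      · simp only [hh, if_neg (not_le.2 hc), if_neg (not_le.2 hc2)]
        rw [hf2.2.2 (s - A) ⟨by linarith, by linarith⟩ (t - A) ⟨by linarith, by linarith⟩]
        rw [abs_of_nonpos (by linarith)]; ring
  have hdist : ∀ s ∈ Icc (0:ℝ) L, ∀ t ∈ Icc (0:ℝ) L, dist (h s) (h t) = |s - t| := by
    intro s hs t ht
    rcases le_or_gt s t with hst | hst
    · rw [key s t hs.1 hst ht.2, abs_of_nonpos (by linarith)]; ring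
    · rw [dist_comm, key t s ht.1 hst.le hs.2, abs_of_nonneg (by linarith)]
  have hgeoh : IsGeo x y h := ⟨h0, hLval, hdist⟩
  -- apply unique_arc to rescaled maps
  set F : ℝ → T := fun u => f (u * L) with hF
  set H : ℝ → T := fun u => h (u * L) with hH
  have hmem : ∀ u ∈ Icc (0:ℝ) 1, u * L ∈ Icc 0 L :=
    fun u hu => ⟨mul_nonneg hu.1 hL.le, by nlinarith [hu.2]⟩
  have contF : ContinuousOn F (Icc 0 1) :=
    hf.continuousOn.comp (by fun_prop) (fun u hu => hmem u hu)
  have contH : ContinuousOn H (Icc 0 1) :=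
    hgeoh.continuousOn.comp (by fun_prop) (fun u hu => hmem u hu)
  have injF : InjOn F (Icc 0 1) := by
    intro u hu v hv huv
    have := hf.injOn (hmem u hu) (hmem v hv) huv
    exact mul_right_cancel₀ hL.ne' this
  have injH : InjOn H (Icc 0 1) := by
    intro u hu v hv huv
    have := hgeoh.injOn (hmem u hu) (hmem v hv) huv
    exact mul_right_cancel₀ hL.ne' this
  have himg := htree.unique_arc x y hxy F H contF injF contH injH
    (by simp [hF, hf.1]) (by simpa [hF] using hf.2.1)
    (by simp [hH, h0]) (by simpa [hH] using hLval)
  have hzH : z ∈ H '' Icc 0 1 := by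
    rw [hH, scale_image hL]
    refine ⟨A, ⟨hA0, by linarith⟩, ?_⟩
    simp only [hh, if_pos (le_refl A), hf1z]
  rw [← himg, hF, scale_image hL] at hzH
  exact hzH

/-- subsegment geodesic -/
lemma IsGeo.sub {x y : T} {f : ℝ → T} (hf : IsGeo x y f) {s t : ℝ}
    (hs : s ∈ Icc 0 (dist x y)) (ht : t ∈ Icc 0 (dist x y)) (hst : s ≤ t) :
    IsGeo (f s) (f t) (fun u => f (s + u)) := by
  have hd : dist (f s) (f t) = t - s := by
    rw [hf.2.2 s hs t ht, abs_of_nonpos (by linarith)]; ring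
  refine ⟨by simp, by rw [hd]; congr 1; ring, ?_⟩
  intro u hu v hv
  rw [hd] at hu hv
  rw [hf.2.2 (s + u) ⟨by linarith [hu.1, hs.1], by linarith [hu.2, ht.2]⟩
    (s + v) ⟨by linarith [hv.1, hs.1], by linarith [hv.2, ht.2]⟩]
  congr 1; ring

lemma IsGeo.seg_sub_eq (htree : IsRTree T) {x y : T} {f : ℝ → T} (hf : IsGeo x y f)
    {s t : ℝ} (hs : s ∈ Icc 0 (dist x y)) (ht : t ∈ Icc 0 (dist x y)) (hst : s ≤ t) :
    seg (f s) (f t) = f '' Icc s t := by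
  have hd : dist (f s) (f t) = t - s := by
    rw [hf.2.2 s hs t ht, abs_of_nonpos (by linarith)]; ring
  rw [(hf.sub hs ht hst).seg_eq htree, hd]
  ext z; constructor
  · rintro ⟨u, hu, rfl⟩
    exact ⟨s + u, ⟨by linarith [hu.1], by linarith [hu.2]⟩, rfl⟩
  · rintro ⟨u, hu, rfl⟩
    exact ⟨u - s, ⟨by linarith [hu.1], by linarith [hu.2]⟩, by simp⟩

lemma seg_isCompact (htree : IsRTree T) (x y : T) : IsCompact (seg x y) := by
  obtain ⟨f, hf⟩ := htree.exists_geo x y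
  rw [hf.seg_eq htree]
  exact isCompact_Icc.image_of_continuousOn hf.continuousOn

lemma seg_isClosed (htree : IsRTree T) (x y : T) : IsClosed (seg x y) :=
  (seg_isCompact htree x y).isClosed

lemma seg_convex (htree : IsRTree T) {x y : T} {p q : T}
    (hp : p ∈ seg x y) (hq : q ∈ seg x y) : seg p q ⊆ seg x y := by
  obtain ⟨f, hf⟩ := htree.exists_geo x y
  rw [hf.seg_eq htree] at hp hq
  obtain ⟨s, hs, rfl⟩ := hp
  obtain ⟨t, ht, rfl⟩ := hq
  rcases le_or_gt s t with hst | hst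
  · rw [hf.seg_sub_eq htree hs ht hst, hf.seg_eq htree]
    exact image_mono (Icc_subset_Icc hs.1 ht.2)
  · rw [seg_comm, hf.seg_sub_eq htree ht hs hst.le, hf.seg_eq htree]
    exact image_mono (Icc_subset_Icc ht.1 hs.2)

end RT

section RT2
variable {T : Type*} [MetricSpace T]

open Set

/-- Gluing two geodesics meeting only at the common endpoint. -/
private lemma concat_glue (htree : IsRTree T) {y m z : T} {g1 g2 h : ℝ → T}
    (hyz : y ≠ z)
    (hg1 : IsGeo y m g1) (hg2 : IsGeo m z g2)
    (hL1 : 0 < dist y m) (hL2 : 0 < dist m z)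
    (hv1 : ∀ u, u ≤ dist y m → h u = g1 u)
    (hv2 : ∀ u, dist y m < u → h u = g2 (u - dist y m))
    (hkey : ∀ p, p ∈ seg m y → p ∈ seg m z → p = m) :
    seg y z = seg y m ∪ seg m z := by
  set L1 := dist y m with hL1d
  set L2 := dist m z with hL2d
  set Λ := L1 + L2 with hΛd
  have hΛ : 0 < Λ := by positivity
  have hg1m : g1 L1 = m := hg1.2.1
  have hg2m : g2 0 = m := hg2.1
  have h0 : h 0 = y := by rw [hv1 0 (by positivity), hg1.1]
  have hΛval : h Λ = z := by
    rw [hv2 Λ (by simp only [hΛd]; linarith)]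
    have : Λ - L1 = L2 := by simp only [hΛd]; ring
    rw [this]; exact hg2.2.1
  -- Lipschitz bound
  have lip : ∀ s t, 0 ≤ s → s ≤ t → t ≤ Λ → dist (h s) (h t) ≤ t - s := by
    intro s t hs hst htΛ
    rcases le_or_gt t L1 with hc | hc
    · rw [hv1 t hc, hv1 s (le_trans hst hc)]
      rw [hg1.2.2 s ⟨hs, le_trans hst hc⟩ t ⟨le_trans hs hst, hc⟩]
      rw [abs_of_nonpos (by linarith)]; linarith
    · rcases le_or_gt s L1 with hc2 | hc2
      · rw [hv1 s hc2, hv2 t hc]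
        have d1 : dist (g1 s) m = L1 - s := by
          have := hg1.2.2 s ⟨hs, hc2⟩ L1 ⟨hL1.le, le_refl _⟩
          rw [hg1m] at this
          rw [this, abs_of_nonpos (by linarith)]; ring
        have d2 : dist m (g2 (t - L1)) = t - L1 := by
          have := hg2.2.2 0 ⟨le_refl _, hL2.le⟩ (t - L1) ⟨by linarith, by simp only [hΛd] at htΛ; linarith⟩
          rw [hg2m] at this
          rw [this, abs_of_nonpos (by linarith)]; ring
        calc dist (g1 s) (g2 (t - L1)) ≤ dist (g1 s) m + dist m (g2 (t - L1)) :=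
              dist_triangle _ _ _
          _ = (L1 - s) + (t - L1) := by rw [d1, d2]
          _ ≤ t - s := by linarith
      · rw [hv2 s hc2, hv2 t (lt_of_lt_of_le hc2 hst)]
        have hsΛ : s ≤ Λ := le_trans hst htΛ
        rw [hg2.2.2 (s - L1) ⟨by linarith, by simp only [hΛd] at hsΛ; linarith⟩
          (t - L1) ⟨by linarith, by simp only [hΛd] at htΛ; linarith⟩]
        rw [abs_of_nonpos (by linarith)]; linarith
  have lip' : ∀ s ∈ Icc (0:ℝ) Λ, ∀ t ∈ Icc (0:ℝ) Λ, dist (h s) (h t) ≤ |s - t| := by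
    intro s hs t ht
    rcases le_or_gt s t with hst | hst
    · rw [abs_of_nonpos (by linarith)]
      have := lip s t hs.1 hst ht.2
      linarith
    · rw [abs_of_nonneg (by linarith), dist_comm]
      have := lip t s ht.1 hst.le hs.2
      linarith
  -- injectivity
  have hinj : InjOn h (Icc 0 Λ) := by
    have haux : ∀ s t, s ∈ Icc (0:ℝ) Λ → t ∈ Icc (0:ℝ) Λ → s ≤ t → h s = h t → s = t := by
      intro s t hs ht hst heq
      rcases le_or_gt t L1 with hc | hc
      · rw [hv1 t hc, hv1 s (le_trans hst hc)] at heq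
        exact hg1.injOn ⟨hs.1, le_trans hst hc⟩ ⟨le_trans hs.1 hst, hc⟩ heq
      · rcases le_or_gt s L1 with hc2 | hc2
        · rw [hv1 s hc2, hv2 t hc] at heq
          have hmem1 : g1 s ∈ seg m y := by
            rw [seg_comm]
            exact hg1.image_subset_seg ⟨s, ⟨hs.1, hc2⟩, rfl⟩
          have hmem2 : g1 s ∈ seg m z := by
            rw [heq]
            exact hg2.image_subset_seg ⟨t - L1, ⟨by linarith, by
              have := ht.2; simp only [hΛd] at this; linarith⟩, rfl⟩
          have hsm : g1 s = m := hkey _ hmem1 hmem2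
          have hs' : s = L1 := by
            apply hg1.injOn ⟨hs.1, hc2⟩ ⟨hL1.le, le_refl _⟩
            rw [hsm, hg1m]
          have htm : g2 (t - L1) = m := by rw [← heq, hsm]
          have ht' : t - L1 = 0 := by
            apply hg2.injOn ⟨by linarith, by have := ht.2; simp only [hΛd] at this; linarith⟩
              ⟨le_refl _, hL2.le⟩
            rw [htm, hg2m]
          linarith
        · rw [hv2 s hc2, hv2 t (by linarith)] at heq
          have hsm : s - L1 ∈ Icc (0:ℝ) (dist m z) := by
            constructor
            · linarith
            · have := le_trans hst ht.2; simp only [hΛd] at this; linarith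
          have htm : t - L1 ∈ Icc (0:ℝ) (dist m z) := by
            constructor
            · linarith
            · have := ht.2; simp only [hΛd] at this; linarith
          have := hg2.injOn hsm htm heq
          linarith
    intro s hs t ht heq
    rcases le_or_gt s t with hst | hst
    · exact haux s t hs ht hst heq
    · exact (haux t s ht hs hst.le heq.symm).symm
  -- continuity
  have hcont : ContinuousOn h (Icc 0 Λ) := by
    apply LipschitzOnWith.continuousOn (K := 1)
    apply LipschitzOnWith.of_dist_le_mul
    intro s hs t ht
    have := lip' s hs t ht
    simpa [Real.dist_eq] using this
  -- image of h
  have himg : h '' Icc 0 Λ = seg y m ∪ seg m z := by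
    rw [(hg1.seg_eq htree), (hg2.seg_eq htree)]
    ext w; constructor
    · rintro ⟨t, ht, rfl⟩
      rcases le_or_gt t L1 with hc | hc
      · left; rw [hv1 t hc]; exact ⟨t, ⟨ht.1, hc⟩, rfl⟩
      · right; rw [hv2 t hc]
        exact ⟨t - L1, ⟨by linarith, by have := ht.2; simp only [hΛd] at this; linarith⟩, rfl⟩
    · rintro (⟨t, ht, rfl⟩ | ⟨t, ht, rfl⟩)
      · exact ⟨t, ⟨ht.1, by simp only [hΛd]; linarith [ht.2]⟩, hv1 t ht.2⟩
      · rcases eq_or_lt_of_le ht.1 with hteq | htpos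
        · refine ⟨L1, ⟨hL1.le, by simp only [hΛd]; linarith⟩, ?_⟩
          rw [hv1 L1 (le_refl _), hg1m, ← hteq, hg2m]
        · refine ⟨t + L1, ⟨by linarith, by simp only [hΛd]; linarith [ht.2]⟩, ?_⟩
          rw [hv2 (t + L1) (by linarith)]
          congr 1; ring
  -- unique arc
  set Lyz := dist y z with hLyz
  have hLyz0 : 0 < Lyz := dist_pos.2 hyz
  obtain ⟨g, hg⟩ := htree.exists_geo y z
  set G : ℝ → T := fun u => g (u * Lyz) with hG
  set H : ℝ → T := fun u => h (u * Λ) with hH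
  have hmemG : ∀ u ∈ Icc (0:ℝ) 1, u * Lyz ∈ Icc 0 Lyz :=
    fun u hu => ⟨mul_nonneg hu.1 hLyz0.le, by nlinarith [hu.2]⟩
  have hmemH : ∀ u ∈ Icc (0:ℝ) 1, u * Λ ∈ Icc 0 Λ :=
    fun u hu => ⟨mul_nonneg hu.1 hΛ.le, by nlinarith [hu.2]⟩
  have contG : ContinuousOn G (Icc 0 1) :=
    hg.continuousOn.comp (by fun_prop) (fun u hu => hmemG u hu)
  have contH : ContinuousOn H (Icc 0 1) :=
    hcont.comp (by fun_prop) (fun u hu => hmemH u hu)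
  have injG : InjOn G (Icc 0 1) := fun u hu v hv huv =>
    mul_right_cancel₀ hLyz0.ne' (hg.injOn (hmemG u hu) (hmemG v hv) huv)
  have injH : InjOn H (Icc 0 1) := fun u hu v hv huv =>
    mul_right_cancel₀ hΛ.ne' (hinj (hmemH u hu) (hmemH v hv) huv)
  have harc := htree.unique_arc y z hyz G H contG injG contH injH
    (by simp [hG, hg.1]) (by simpa [hG] using hg.2.1)
    (by simp [hH, h0]) (by simpa [hH] using hΛval)
  have e1 : G '' Icc 0 1 = seg y z := by
    rw [hG, scale_image hLyz0, ← hg.seg_eq htree]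
  have e2 : H '' Icc 0 1 = seg y m ∪ seg m z := by
    rw [hH, scale_image hΛ, himg]
  rw [← e1, harc, e2]

/-- Existence of medians with the splitting property. -/
lemma exists_median (htree : IsRTree T) (x y z : T) :
    ∃ m : T, m ∈ seg x y ∧ m ∈ seg x z ∧ m ∈ seg y z ∧
      seg y z = seg y m ∪ seg m z := by
  rcases eq_or_ne y z with rfl | hyz
  · refine ⟨y, right_mem_seg x y, right_mem_seg x y, left_mem_seg y y, ?_⟩
    rw [seg_self y, union_self]
  obtain ⟨f, hf⟩ := htree.exists_geo x y
  set L := dist x y with hL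
  have hL0 : 0 ≤ L := dist_nonneg
  set A := {t : ℝ | t ∈ Icc 0 L ∧ f t ∈ seg x z} with hAdef
  have hA0 : (0:ℝ) ∈ A := ⟨⟨le_refl _, hL0⟩, by rw [hf.1]; exact left_mem_seg x z⟩
  have hAne : A.Nonempty := ⟨0, hA0⟩
  have hAbdd : BddAbove A := ⟨L, fun t ht => ht.1.2⟩
  set a := sSup A with ha
  have haIcc : a ∈ Icc (0:ℝ) L := ⟨le_csSup hAbdd hA0, csSup_le hAne (fun t ht => ht.1.2)⟩
  have haA : a ∈ A := by
    refine ⟨haIcc, ?_⟩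
    have hcl : f a ∈ closure (seg x z) := by
      rw [Metric.mem_closure_iff]
      intro ε hε
      obtain ⟨t, htA, hta⟩ := exists_lt_of_lt_csSup hAne (by linarith : a - ε < a)
      refine ⟨f t, htA.2, ?_⟩
      rw [hf.2.2 a haIcc t htA.1]
      rw [abs_of_nonneg (by linarith [le_csSup hAbdd htA] : (0:ℝ) ≤ a - t)]
      linarith [le_csSup hAbdd htA]
    rwa [(seg_isClosed htree x z).closure_eq] at hcl
  set m := f a with hm
  have hmxy : m ∈ seg x y := hf.image_subset_seg ⟨a, haIcc, rfl⟩
  have hmxz : m ∈ seg x z := haA.2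
  have hkey : ∀ p, p ∈ seg m y → p ∈ seg m z → p = m := by
    intro p hpmy hpmz
    have hseg : seg m y = f '' Icc a L := by
      have := hf.seg_sub_eq htree haIcc ⟨hL0, le_refl L⟩ haIcc.2
      rw [hf.2.1] at this
      exact this
    rw [hseg] at hpmy
    obtain ⟨t, htIcc, rfl⟩ := hpmy
    have htL : t ∈ Icc (0:ℝ) L := ⟨le_trans haIcc.1 htIcc.1, htIcc.2⟩
    have hxp : dist x (f t) = t := by
      have := hf.2.2 0 ⟨le_refl _, hL0⟩ t htL
      rw [hf.1] at this
      rw [this, abs_of_nonpos (by linarith [htL.1])]; ring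
    have hxm : dist x m = a := by
      have := hf.2.2 0 ⟨le_refl _, hL0⟩ a haIcc
      rw [hf.1] at this
      rw [this, abs_of_nonpos (by linarith [haIcc.1])]; ring
    have hmp : dist m (f t) = t - a := by
      have := hf.2.2 a haIcc t htL
      rw [this, abs_of_nonpos (by linarith [htIcc.1])]; ring
    have hptxz : f t ∈ seg x z := by
      have h1 : dist m (f t) + dist (f t) z = dist m z := hpmz
      have h2 : dist x m + dist m z = dist x z := hmxz
      show dist x (f t) + dist (f t) z = dist x z
      rw [hxp]
      rw [hxm] at h2
      rw [hmp] at h1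
      linarith
    have htA : t ∈ A := ⟨htL, hptxz⟩
    have : t = a := le_antisymm (le_csSup hAbdd htA) htIcc.1
    rw [this]
  have hunion : seg y z = seg y m ∪ seg m z := by
    rcases eq_or_ne m y with hmy | hmy
    · rw [hmy, seg_self y]
      have : seg y z ⊆ {y} ∪ seg y z := subset_union_right
      refine Subset.antisymm this ?_
      rintro w (hw | hw)
      · rw [mem_singleton_iff] at hw; rw [hw]; exact left_mem_seg y z
      · exact hw
    rcases eq_or_ne m z with hmz | hmz
    · rw [hmz, seg_self z]
      refine Subset.antisymm subset_union_left ?_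
      rintro w (hw | hw)
      · exact hw
      · rw [mem_singleton_iff] at hw; rw [hw]; exact right_mem_seg y z
    obtain ⟨g1, hg1⟩ := htree.exists_geo y m
    obtain ⟨g2, hg2⟩ := htree.exists_geo m z
    have hL1 : 0 < dist y m := dist_pos.2 (Ne.symm hmy)
    have hL2 : 0 < dist m z := dist_pos.2 hmz
    exact concat_glue htree hyz hg1 hg2 hL1 hL2
      (fun u hu => if_pos hu) (fun u hu => if_neg (not_le.2 hu)) hkey
  refine ⟨m, hmxy, hmxz, ?_, hunion⟩
  rw [hunion]
  exact Or.inl (right_mem_seg y m)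

/-- tripod: a segment is inside the union of segments through any third point. -/
lemma seg_subset_union (htree : IsRTree T) (x y z : T) :
    seg y z ⊆ seg y x ∪ seg x z := by
  obtain ⟨m, hmxy, hmxz, hmyz, huni⟩ := exists_median htree x y z
  rw [huni]
  apply union_subset_union
  · rw [seg_comm y x]
    exact seg_convex htree (right_mem_seg x y) hmxy
  · exact seg_convex htree hmxz (right_mem_seg x z)

lemma not_mem_seg_trans (htree : IsRTree T) {x p q r : T}
    (h1 : x ∉ seg p q) (h2 : x ∉ seg q r) : x ∉ seg p r := by
  intro hx
  rcases seg_subset_union htree q p r hx with h | h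
  · exact h1 h
  · exact h2 h

lemma mid_not_through {x z w : T} (hw : w ∈ seg x z) (hwx : w ≠ x) : x ∉ seg w z := by
  intro hx
  have h1 : dist x w + dist w z = dist x z := hw
  have h2 : dist w x + dist x z = dist w z := hx
  rw [dist_comm w x] at h2
  have h3 : dist x w = 0 := by linarith
  rw [dist_comm] at h3
  exact hwx (dist_eq_zero.1 h3)
  
end RT2

section RT3
variable {T : Type*} [MetricSpace T]
open Set

lemma IsNondegSeg.closed (htree : IsRTree T) {I : Set T} (h : IsNondegSeg I) :
    IsClosed I := by
  obtain ⟨x, y, hxy, rfl⟩ := h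
  exact seg_isClosed htree x y

lemma IsNondegSeg.convex (htree : IsRTree T) {I : Set T} (h : IsNondegSeg I) :
    ∀ p ∈ I, ∀ q ∈ I, seg p q ⊆ I := by
  obtain ⟨x, y, hxy, rfl⟩ := h
  exact fun p hp q hq => seg_convex htree hp hq

lemma IsNondegSeg.nontrivial {I : Set T} (h : IsNondegSeg I) : I.Nontrivial := by
  obtain ⟨x, y, hxy, rfl⟩ := h
  exact ⟨x, left_mem_seg x y, y, right_mem_seg x y, hxy⟩

lemma IsNondegSeg.nonempty {I : Set T} (h : IsNondegSeg I) : I.Nonempty :=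
  h.nontrivial.nonempty

/-- Nontrivial intersection of two non-degenerate segments is a non-degenerate segment. -/
lemma inter_nondeg (htree : IsRTree T) {S1 S2 : Set T}
    (h1 : IsNondegSeg S1) (h2 : IsNondegSeg S2) (hnt : (S1 ∩ S2).Nontrivial) :
    IsNondegSeg (S1 ∩ S2) := by
  obtain ⟨x, y, hxy, rfl⟩ := h1
  have h2cl : IsClosed S2 := h2.closed htree
  have h2cv : ∀ p ∈ S2, ∀ q ∈ S2, seg p q ⊆ S2 := h2.convex htree
  obtain ⟨f, hf⟩ := htree.exists_geo x y
  set L := dist x y with hL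
  have hL0 : 0 ≤ L := dist_nonneg
  set P := {t : ℝ | t ∈ Icc 0 L ∧ f t ∈ S2} with hPdef
  obtain ⟨p, ⟨hp1, hp2⟩, q, ⟨hq1, hq2⟩, hpq⟩ := hnt
  rw [hf.seg_eq htree] at hp1 hq1
  obtain ⟨s1, hs1, rfl⟩ := hp1
  obtain ⟨s2, hs2, rfl⟩ := hq1
  have hs12 : s1 ≠ s2 := fun h => hpq (by rw [h])
  have hPne : P.Nonempty := ⟨s1, hs1, hp2⟩
  have hPbddA : BddAbove P := ⟨L, fun t ht => ht.1.2⟩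
  have hPbddB : BddBelow P := ⟨0, fun t ht => ht.1.1⟩
  set α := sInf P with hα
  set β := sSup P with hβ
  have hαIcc : α ∈ Icc (0:ℝ) L :=
    ⟨le_csInf hPne (fun t ht => ht.1.1), csInf_le_of_le hPbddB ⟨hs1, hp2⟩ hs1.2⟩
  have hβIcc : β ∈ Icc (0:ℝ) L :=
    ⟨le_csSup_of_le hPbddA ⟨hs1, hp2⟩ hs1.1, csSup_le hPne (fun t ht => ht.1.2)⟩
  have hβP : β ∈ P := by
    refine ⟨hβIcc, ?_⟩
    have hcl : f β ∈ closure S2 := by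
      rw [Metric.mem_closure_iff]
      intro ε hε
      obtain ⟨t, htP, hta⟩ := exists_lt_of_lt_csSup hPne (by linarith : β - ε < β)
      refine ⟨f t, htP.2, ?_⟩
      have hle : t ≤ β := le_csSup hPbddA htP
      rw [hf.2.2 β hβIcc t htP.1, abs_of_nonneg (by linarith)]
      linarith
    rwa [h2cl.closure_eq] at hcl
  have hαP : α ∈ P := by
    refine ⟨hαIcc, ?_⟩
    have hcl : f α ∈ closure S2 := by
      rw [Metric.mem_closure_iff]
      intro ε hε
      obtain ⟨t, htP, hta⟩ := exists_lt_of_csInf_lt hPne (by linarith : α < α + ε)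
      refine ⟨f t, htP.2, ?_⟩
      have hle : α ≤ t := csInf_le hPbddB htP
      rw [hf.2.2 α hαIcc t htP.1, abs_of_nonpos (by linarith)]
      linarith
    rwa [h2cl.closure_eq] at hcl
  have hαβ : α < β := by
    rcases lt_or_gt_of_ne hs12 with h | h
    · have := csInf_le hPbddB (⟨hs1, hp2⟩ : s1 ∈ P)
      have := le_csSup hPbddA (⟨hs2, hq2⟩ : s2 ∈ P)
      linarith
    · have := csInf_le hPbddB (⟨hs2, hq2⟩ : s2 ∈ P)
      have := le_csSup hPbddA (⟨hs1, hp2⟩ : s1 ∈ P)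
      linarith
  have hPconv : ∀ t, α ≤ t → t ≤ β → t ∈ P := by
    intro t ht1 ht2
    have htIcc : t ∈ Icc (0:ℝ) L := ⟨le_trans hαIcc.1 ht1, le_trans ht2 hβIcc.2⟩
    refine ⟨htIcc, ?_⟩
    have : f t ∈ seg (f α) (f β) := by
      rw [hf.seg_sub_eq htree hαIcc hβIcc hαβ.le]
      exact ⟨t, ⟨ht1, ht2⟩, rfl⟩
    exact h2cv _ hαP.2 _ hβP.2 this
  have heq : seg x y ∩ S2 = f '' Icc α β := by
    ext w; constructor
    · rintro ⟨hw1, hw2⟩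
      rw [hf.seg_eq htree] at hw1
      obtain ⟨t, ht, rfl⟩ := hw1
      have htP : t ∈ P := ⟨ht, hw2⟩
      exact ⟨t, ⟨csInf_le hPbddB htP, le_csSup hPbddA htP⟩, rfl⟩
    · rintro ⟨t, ht, rfl⟩
      have htP : t ∈ P := hPconv t ht.1 ht.2
      constructor
      · rw [hf.seg_eq htree]; exact ⟨t, htP.1, rfl⟩
      · exact htP.2
  refine ⟨f α, f β, ?_, ?_⟩
  · intro h
    exact hαβ.ne (hf.injOn hαIcc hβIcc h)
  · rw [heq, hf.seg_sub_eq htree hαIcc hβIcc hαβ.le]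

/-- Baire category on an arc: a countable closed cover of an arc has a member meeting
the arc in two points. -/
lemma baire_arc (htree : IsRTree T) {p q : T} (hpq : p ≠ q) {ι : Type*} [Countable ι]
    (S : ι → Set T) (hcl : ∀ i, IsClosed (S i)) (hcov : seg p q ⊆ ⋃ i, S i) :
    ∃ i a b, a ≠ b ∧ (a ∈ S i ∧ a ∈ seg p q) ∧ (b ∈ S i ∧ b ∈ seg p q) := by
  obtain ⟨f, hf⟩ := htree.exists_geo p q
  set L := dist p q with hL
  have hL0 : 0 < L := dist_pos.2 hpq
  set X := Icc (0:ℝ) L with hX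
  haveI : CompleteSpace X := isClosed_Icc.completeSpace_coe
  haveI : Nonempty X := ⟨⟨0, le_refl _, hL0.le⟩⟩
  set C : ι → Set X := fun i => (X.restrict f) ⁻¹' (S i) with hC
  have hCcl : ∀ i, IsClosed (C i) :=
    fun i => (hcl i).preimage hf.continuousOn.restrict
  have hCun : ⋃ i, C i = univ := by
    ext t
    simp only [mem_iUnion, mem_univ, iff_true]
    have : f t.1 ∈ seg p q := hf.image_subset_seg ⟨t.1, t.2, rfl⟩
    obtain ⟨i, hi⟩ := mem_iUnion.1 (hcov this)
    exact ⟨i, hi⟩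
  obtain ⟨i, x₀, hx₀⟩ := nonempty_interior_of_iUnion_of_closed hCcl hCun
  obtain ⟨ε, hε, hball⟩ := Metric.isOpen_iff.1 isOpen_interior x₀ hx₀
  have hx₀C : x₀ ∈ C i := interior_subset hx₀
  set t₀ := x₀.1 with ht₀
  have ht₀Icc : t₀ ∈ Icc (0:ℝ) L := x₀.2
  -- construct a second point
  have hstep : ∃ t₁, t₁ ∈ Icc (0:ℝ) L ∧ t₁ ≠ t₀ ∧ |t₁ - t₀| < ε := by
    rcases le_or_gt t₀ (L/2) with hc | hc
    · refine ⟨t₀ + min (ε/2) (L/2), ⟨by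
        have h1 : (0:ℝ) < min (ε/2) (L/2) := lt_min (by linarith) (by linarith)
        linarith [ht₀Icc.1], by
        have : min (ε/2) (L/2) ≤ L/2 := min_le_right _ _
        linarith⟩, ?_, ?_⟩
      · have : (0:ℝ) < min (ε/2) (L/2) := lt_min (by linarith) (by linarith)
        intro h; nlinarith [h]
      · have h1 : (0:ℝ) < min (ε/2) (L/2) := lt_min (by linarith) (by linarith)
        have h2 : min (ε/2) (L/2) ≤ ε/2 := min_le_left _ _
        rw [abs_of_nonneg (by linarith)]
        · linarith
    · refine ⟨t₀ - min (ε/2) (L/2), ⟨by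
        have : min (ε/2) (L/2) ≤ L/2 := min_le_right _ _
        linarith, by
        have h1 : (0:ℝ) < min (ε/2) (L/2) := lt_min (by linarith) (by linarith)
        linarith [ht₀Icc.2]⟩, ?_, ?_⟩
      · have : (0:ℝ) < min (ε/2) (L/2) := lt_min (by linarith) (by linarith)
        intro h; nlinarith [h]
      · have h1 : (0:ℝ) < min (ε/2) (L/2) := lt_min (by linarith) (by linarith)
        have h2 : min (ε/2) (L/2) ≤ ε/2 := min_le_left _ _
        rw [abs_of_nonpos (by linarith)]
        linarith
  obtain ⟨t₁, ht₁Icc, ht₁ne, ht₁ε⟩ := hstep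
  have hmem : (⟨t₁, ht₁Icc⟩ : X) ∈ Metric.ball x₀ ε := by
    rw [Metric.mem_ball, Subtype.dist_eq, Real.dist_eq]
    exact ht₁ε
  have ht₁C : (⟨t₁, ht₁Icc⟩ : X) ∈ C i := interior_subset (hball hmem)
  refine ⟨i, f t₀, f t₁, ?_, ⟨hx₀C, hf.image_subset_seg ⟨t₀, ht₀Icc, rfl⟩⟩,
    ⟨ht₁C, hf.image_subset_seg ⟨t₁, ht₁Icc, rfl⟩⟩⟩
  intro h
  exact ht₁ne (hf.injOn ht₁Icc ht₀Icc h.symm)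

end RT3

/-! ### group action layer (generic group) -/
section RT4
variable {G : Type*} [Group G] {T : Type*} [MetricSpace T] [MulAction G T]
open Set Pointwise

lemma smul_seg (hd : ∀ (g : G) (a b : T), dist (g • a) (g • b) = dist a b)
    (g : G) (x y : T) : g • seg x y = seg (g • x) (g • y) := by
  ext z
  rw [mem_smul_set_iff_inv_smul_mem]
  simp only [seg, mem_setOf_eq]
  have e1 : dist x (g⁻¹ • z) = dist (g • x) z := by
    rw [← hd g x (g⁻¹ • z), smul_inv_smul]
  have e2 : dist (g⁻¹ • z) y = dist z (g • y) := by
    rw [← hd g (g⁻¹ • z) y, smul_inv_smul]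
  have e3 : dist x y = dist (g • x) (g • y) := (hd g x y).symm
  rw [e1, e2, e3]

lemma smul_nondeg (hd : ∀ (g : G) (a b : T), dist (g • a) (g • b) = dist a b)
    {J : Set T} (hJ : IsNondegSeg J) (g : G) : IsNondegSeg (g • J) := by
  obtain ⟨x, y, hxy, rfl⟩ := hJ
  refine ⟨g • x, g • y, ?_, smul_seg hd g x y⟩
  intro h
  apply hxy
  have := hd g x y
  rw [h, dist_self] at this
  exact dist_eq_zero.1 this.symm

lemma smul_set_nontrivial_iff (g : G) {A : Set T} :
    (g • A).Nontrivial ↔ A.Nontrivial := by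
  constructor
  · rintro ⟨a, ⟨a', ha', rfl⟩, b, ⟨b', hb', rfl⟩, hab⟩
    exact ⟨a', ha', b', hb', fun h => hab (by rw [h])⟩
  · rintro ⟨a, ha, b, hb, hab⟩
    exact ⟨g • a, smul_mem_smul_set ha, g • b, smul_mem_smul_set hb,
      fun h => hab (smul_left_cancel g h)⟩

end RT4

section RT5
variable {G : Type*} [Group G] {T : Type*} [MetricSpace T] [MulAction G T]
open Set Pointwise List

/-- two translates of `J` overlap in more than a point -/
def chainRel (J : Set T) (g h : G) : Prop := ((g • J) ∩ (h • J)).Nontrivial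

/-- chain equivalence on translates of `J` -/
def chRel (J : Set T) (g h : G) : Prop :=
  ∃ l : List G, l.Chain' (chainRel J) ∧ l.head? = some g ∧ l.getLast? = some h

variable {J : Set T}

lemma chainRel_symm {g h : G} (hr : chainRel J g h) : chainRel J h g := by
  rwa [chainRel, Set.inter_comm]

lemma chainRel_self (hd : ∀ (g : G) (a b : T), dist (g • a) (g • b) = dist a b)
    (hJ : IsNondegSeg J) (g : G) : chainRel J g g := by
  rw [chainRel, Set.inter_self]
  exact (smul_nondeg hd hJ g).nontrivial

lemma chRel_refl (g : G) : chRel J g g :=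
  ⟨[g], List.isChain_singleton g, rfl, rfl⟩

lemma chRel_of_chainRel {g h : G} (hr : chainRel J g h) : chRel J g h :=
  ⟨[g, h], List.isChain_pair.2 hr, rfl, rfl⟩

lemma chRel_symm {g h : G} (hr : chRel J g h) : chRel J h g := by
  obtain ⟨l, hc, hh, hl⟩ := hr
  refine ⟨l.reverse, ?_, ?_, ?_⟩
  · rw [List.Chain', List.isChain_reverse]
    exact (show List.IsChain _ l from hc).imp (fun a b hab => chainRel_symm hab)
  · rwa [List.head?_reverse]
  · rwa [List.getLast?_reverse]

lemma chRel_trans (hd : ∀ (g : G) (a b : T), dist (g • a) (g • b) = dist a b)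
    (hJ : IsNondegSeg J) {g h k : G} (h1 : chRel J g h) (h2 : chRel J h k) :
    chRel J g k := by
  obtain ⟨l1, hc1, hh1, hl1⟩ := h1
  obtain ⟨l2, hc2, hh2, hl2⟩ := h2
  refine ⟨l1 ++ l2, ?_, ?_, ?_⟩
  · refine hc1.append hc2 ?_
    intro x hx y hy
    rw [hl1, Option.mem_some_iff] at hx
    rw [hh2, Option.mem_some_iff] at hy
    rw [← hx, ← hy]
    exact chainRel_self hd hJ h
  · have hne : l1 ≠ [] := by rintro rfl; simp at hh1
    rw [List.head?_append, hh1]; rfl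
  · have hne : l2 ≠ [] := by rintro rfl; simp at hl2
    rw [List.getLast?_append, hl2]; rfl

lemma chRel_of_mem_chain (hd : ∀ (g : G) (a b : T), dist (g • a) (g • b) = dist a b)
    (hJ : IsNondegSeg J) :
    ∀ (l : List G), l.Chain' (chainRel J) → ∀ g, l.head? = some g →
      ∀ w ∈ l, chRel J g w := by
  intro l
  induction l with
  | nil => intro _ g hg; simp at hg
  | cons a l ih =>
    intro hc g hg w hw
    have hga : g = a := by simpa using hg.symm
    subst hga
    rcases List.mem_cons.1 hw with rfl | hw'
    · exact chRel_refl w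
    · match l, hw' with
      | b :: l', hw' =>
        rw [List.Chain', List.isChain_cons_cons] at hc
        have hbw : chRel J b w := ih hc.2 b rfl w hw'
        exact chRel_trans hd hJ (chRel_of_chainRel hc.1) hbw

/-- union of translates along a chain is arcwise connected enough -/
lemma chain_union_convex (htree : IsRTree T)
    (hd : ∀ (g : G) (a b : T), dist (g • a) (g • b) = dist a b)
    (hJ : IsNondegSeg J) :
    ∀ (l : List G) (g h : G), List.Chain' (chainRel J) (g :: l) →
      (g :: l).getLast? = some h → ∀ p ∈ g • J, ∀ q ∈ h • J,
      seg p q ⊆ ⋃ w ∈ g :: l, w • J := by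
  intro l
  induction l with
  | nil =>
    intro g h hc hl p hp q hq
    have hgh : g = h := by simpa using hl
    rw [← hgh] at hq
    intro x hx
    have hxg : x ∈ g • J := (smul_nondeg hd hJ g).convex htree p hp q hq hx
    simp only [mem_iUnion]
    exact ⟨g, by simp, hxg⟩
  | cons b l' ih =>
    intro g h hc hl p hp q hq
    rw [List.getLast?_cons_cons] at hl
    rw [List.Chain', List.isChain_cons_cons] at hc
    obtain ⟨r, hr1, hr2⟩ := hc.1.nonempty
    have hIH := ih b h hc.2 hl r hr2 q hq
    obtain ⟨m, hm_rp, hm_rq, hm_pq, huni⟩ := exists_median htree r p q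
    have hseg_pm : seg p m ⊆ g • J := by
      have hmJ : m ∈ g • J :=
        (smul_nondeg hd hJ g).convex htree r hr1 p hp hm_rp
      exact (smul_nondeg hd hJ g).convex htree p hp m hmJ
    have hseg_mq : seg m q ⊆ ⋃ w ∈ b :: l', w • J :=
      Subset.trans (seg_convex htree hm_rq (right_mem_seg r q)) hIH
    rw [huni]
    rintro x (hx | hx)
    · simp only [mem_iUnion]
      exact ⟨g, by simp, hseg_pm hx⟩
    · have hxm := hseg_mq hx
      simp only [mem_iUnion] at hxm ⊢
      obtain ⟨w, hw, hxw⟩ := hxm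
      exact ⟨w, List.mem_cons_of_mem g hw, hxw⟩

/-- the union of the chain-class of `g` -/
def Ycl (J : Set T) (g : G) : Set T := ⋃ h, ⋃ (_ : chRel J g h), h • J

lemma subset_Ycl {g h : G} (hr : chRel J g h) : h • J ⊆ Ycl J g := by
  intro x hx
  simp only [Ycl, mem_iUnion]
  exact ⟨h, hr, hx⟩

lemma self_subset_Ycl (g : G) : g • J ⊆ Ycl J g := subset_Ycl (chRel_refl g)

lemma Ycl_convex (htree : IsRTree T)
    (hd : ∀ (g : G) (a b : T), dist (g • a) (g • b) = dist a b)
    (hJ : IsNondegSeg J) (g : G) :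
    ∀ p ∈ Ycl J g, ∀ q ∈ Ycl J g, seg p q ⊆ Ycl J g := by
  intro p hp q hq
  simp only [Ycl, mem_iUnion] at hp hq
  obtain ⟨h1, hrel1, hp⟩ := hp
  obtain ⟨h2, hrel2, hq⟩ := hq
  have h12 : chRel J h1 h2 := chRel_trans hd hJ (chRel_symm hrel1) hrel2
  obtain ⟨l, hc, hh, hl⟩ := h12
  cases l with
  | nil => simp at hh
  | cons a tl =>
    obtain rfl : h1 = a := by
      have : a = h1 := by simpa using hh
      exact this.symm
    have hsub := chain_union_convex htree hd hJ tl h1 h2 hc hl p hp q hq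
    refine Subset.trans hsub ?_
    intro x hx
    simp only [mem_iUnion] at hx
    obtain ⟨w, hw, hxw⟩ := hx
    have hrw : chRel J h1 w := chRel_of_mem_chain hd hJ (h1 :: tl) hc h1 rfl w hw
    exact subset_Ycl (chRel_trans hd hJ hrel1 hrw) hxw

lemma chRel_smul_of (v : G) {g h : G} (hr : chRel J g h) : chRel J (v * g) (v * h) := by
  obtain ⟨l, hc, hh, hl⟩ := hr
  refine ⟨l.map (fun w => v * w), ?_, ?_, ?_⟩
  · rw [List.Chain', List.isChain_map]
    refine (show List.IsChain _ l from hc).imp ?_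
    intro a b hab
    rw [chainRel] at hab ⊢
    rw [mul_smul, mul_smul, ← smul_set_inter]
    exact (smul_set_nontrivial_iff v).2 hab
  · rw [List.head?_map, hh]; rfl
  · rw [List.getLast?_map, hl]; rfl

lemma chRel_smul_iff (v : G) {g h : G} : chRel J (v * g) (v * h) ↔ chRel J g h := by
  constructor
  · intro hr
    have := chRel_smul_of v⁻¹ hr
    simpa [← mul_assoc] using this
  · exact chRel_smul_of v

lemma Ycl_smul (v g : G) : v • Ycl J g = Ycl J (v * g) := by
  ext z
  rw [mem_smul_set_iff_inv_smul_mem]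
  simp only [Ycl, mem_iUnion]
  constructor
  · rintro ⟨h, hr, hz⟩
    refine ⟨v * h, (chRel_smul_iff v).2 hr, ?_⟩
    rwa [mul_smul, mem_smul_set_iff_inv_smul_mem]
  · rintro ⟨h', hr, hz⟩
    refine ⟨v⁻¹ * h', ?_, ?_⟩
    · apply (chRel_smul_iff v).1
      rw [mul_inv_cancel_left]
      exact hr
    · rw [mul_smul]
      exact smul_mem_smul_set hz

lemma Ycl_eq_of_chRel (hd : ∀ (g : G) (a b : T), dist (g • a) (g • b) = dist a b)
    (hJ : IsNondegSeg J) {g g' : G} (hr : chRel J g g') : Ycl J g = Ycl J g' := by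
  ext z
  simp only [Ycl, mem_iUnion]
  constructor
  · rintro ⟨h, hrel, hz⟩
    exact ⟨h, chRel_trans hd hJ (chRel_symm hr) hrel, hz⟩
  · rintro ⟨h, hrel, hz⟩
    exact ⟨h, chRel_trans hd hJ hr hrel, hz⟩

/-- Baire merging: if two class unions share two points, the classes coincide. -/
lemma chRel_of_nontrivial_inter [Countable G] (htree : IsRTree T)
    (hd : ∀ (g : G) (a b : T), dist (g • a) (g • b) = dist a b)
    (hJ : IsNondegSeg J) {g g' : G}
    (hnt : (Ycl J g ∩ Ycl J g').Nontrivial) : chRel J g g' := by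
  classical
  obtain ⟨p, hp, q, hq, hpq⟩ := hnt
  have hseg : seg p q ⊆ Ycl J g ∩ Ycl J g' := by
    intro x hx
    exact ⟨Ycl_convex htree hd hJ g p hp.1 q hq.1 hx,
      Ycl_convex htree hd hJ g' p hp.2 q hq.2 hx⟩
  -- first Baire application
  set S : G → Set T := fun h => if chRel J g h then h • J else ∅ with hS
  have hScl : ∀ h, IsClosed (S h) := by
    intro h
    simp only [hS]
    split_ifs
    · exact (smul_nondeg hd hJ h).closed htree
    · exact isClosed_empty
  have hScov : seg p q ⊆ ⋃ h, S h := by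
    intro x hx
    have := (hseg hx).1
    simp only [Ycl, mem_iUnion] at this
    obtain ⟨h, hr, hxh⟩ := this
    exact mem_iUnion.2 ⟨h, by simp only [hS, if_pos hr]; exact hxh⟩
  obtain ⟨h, a, b, hab, ⟨haS, hapq⟩, ⟨hbS, hbpq⟩⟩ := baire_arc htree hpq S hScl hScov
  have hrgh : chRel J g h := by
    by_contra hcon
    simp only [hS, if_neg hcon] at haS
    exact haS
  simp only [hS, if_pos hrgh] at haS hbS
  -- second Baire application on seg a b
  have hsegab : seg a b ⊆ Ycl J g' := by
    intro x hx
    exact (hseg (seg_convex htree hapq hbpq hx)).2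
  have hsegab_hJ : seg a b ⊆ h • J :=
    (smul_nondeg hd hJ h).convex htree a haS b hbS
  set S' : G → Set T := fun h' => if chRel J g' h' then h' • J else ∅ with hS'
  have hS'cl : ∀ h', IsClosed (S' h') := by
    intro h'
    simp only [hS']
    split_ifs
    · exact (smul_nondeg hd hJ h').closed htree
    · exact isClosed_empty
  have hS'cov : seg a b ⊆ ⋃ h', S' h' := by
    intro x hx
    have := hsegab hx
    simp only [Ycl, mem_iUnion] at this
    obtain ⟨h', hr, hxh⟩ := this
    exact mem_iUnion.2 ⟨h', by simp only [hS', if_pos hr]; exact hxh⟩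
  obtain ⟨h', a', b', hab', ⟨ha'S, ha'ab⟩, ⟨hb'S, hb'ab⟩⟩ :=
    baire_arc htree hab S' hS'cl hS'cov
  have hrg'h' : chRel J g' h' := by
    by_contra hcon
    simp only [hS', if_neg hcon] at ha'S
    exact ha'S
  simp only [hS', if_pos hrg'h'] at ha'S hb'S
  -- h • J and h' • J share two points
  have hhh' : chainRel J h h' :=
    ⟨a', ⟨hsegab_hJ ha'ab, ha'S⟩, b', ⟨hsegab_hJ hb'ab, hb'S⟩, hab'⟩
  exact chRel_trans hd hJ (chRel_trans hd hJ hrgh (chRel_of_chainRel hhh'))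
    (chRel_symm hrg'h')

end RT5

section RT6
variable {G : Type*} [Group G] {T : Type*} [MetricSpace T] [MulAction G T]
open Set Pointwise List

variable {J : Set T}

private lemma mem_of_head?_eq {l : List G} {g : G} (h : l.head? = some g) : g ∈ l := by
  cases l with
  | nil => simp at h
  | cons a l =>
    have : a = g := by simpa using h
    rw [← this]; exact List.mem_cons_self

private lemma mem_of_getLast?_eq {l : List G} {g : G} (h : l.getLast? = some g) : g ∈ l := by
  rw [← List.head?_reverse] at h
  have := mem_of_head?_eq h
  rwa [List.mem_reverse] at this

/-- In the single-class case, every germ on a segment towards another point is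
covered by a translate of `J`. -/
lemma germ_exists (htree : IsRTree T)
    (hd : ∀ (g : G) (a b : T), dist (g • a) (g • b) = dist a b)
    (hJ : IsNondegSeg J)
    (hrel : ∀ g h : G, chRel J g h)
    (hcov : ∀ x : T, ∃ h : G, x ∈ h • J)
    (x y₀ : T) (hxy : x ≠ y₀) :
    ∃ (g : G) (m : T), m ≠ x ∧ m ∈ seg x y₀ ∧ seg x m ⊆ g • J := by
  classical
  set D : Set T := {z | z ≠ x ∧ x ∉ seg z y₀} with hD
  have hy₀D : y₀ ∈ D := by
    refine ⟨hxy.symm, ?_⟩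
    rw [seg_self y₀, mem_singleton_iff]
    exact hxy
  by_cases hgood : ∃ g : G, x ∈ g • J ∧ ∃ z ∈ g • J, z ∈ D
  · obtain ⟨g, hxg, z, hzg, hzD⟩ := hgood
    obtain ⟨m, hm_xz, hm_xy₀, hm_zy₀, _⟩ := exists_median htree x z y₀
    refine ⟨g, m, ?_, hm_xy₀, ?_⟩
    · intro h
      exact hzD.2 (h ▸ hm_zy₀)
    · have hmg : m ∈ g • J := (smul_nondeg hd hJ g).convex htree x hxg z hzg hm_xz
      exact (smul_nondeg hd hJ g).convex htree x hxg m hmg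
  · exfalso
    -- every translate meeting D lies in D
    have claim1 : ∀ g : G, (∃ z ∈ g • J, z ∈ D) → ∀ w ∈ g • J, w ∈ D := by
      intro g ⟨z, hzg, hzD⟩ w hwg
      have hwx : w ≠ x := by
        rintro rfl
        exact hgood ⟨g, hwg, z, hzg, hzD⟩
      have hxwz : x ∉ seg w z := by
        intro hx
        exact hgood ⟨g, (smul_nondeg hd hJ g).convex htree w hwg z hzg hx, z, hzg, hzD⟩
      exact ⟨hwx, not_mem_seg_trans htree hxwz hzD.2⟩
    -- chain induction: translates chained to one avoiding D also avoid D
    have claim2 : ∀ (l : List G) (g : G), List.Chain' (chainRel J) (g :: l) →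
        ¬(∃ z ∈ g • J, z ∈ D) → ∀ w ∈ g :: l, ¬(∃ z ∈ w • J, z ∈ D) := by
      intro l
      induction l with
      | nil =>
        intro g _ hg w hw
        rcases List.mem_cons.1 hw with rfl | hw'
        · exact hg
        · simp at hw'
      | cons b l' ih =>
        intro g hc hg w hw
        rw [List.Chain', List.isChain_cons_cons] at hc
        have hbavoid : ¬(∃ z ∈ b • J, z ∈ D) := by
          rintro ⟨z, hzb, hzD⟩
          obtain ⟨r, hrg, hrb⟩ := hc.1.nonempty
          have : r ∈ D := claim1 b ⟨z, hzb, hzD⟩ r hrb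
          exact hg ⟨r, hrg, this⟩
        rcases List.mem_cons.1 hw with rfl | hw'
        · exact hg
        · exact ih b hc.2 hbavoid w hw'
    obtain ⟨g₀, hg₀⟩ := hcov x
    obtain ⟨g₁, hg₁⟩ := hcov y₀
    have hg₀avoid : ¬(∃ z ∈ g₀ • J, z ∈ D) := by
      rintro ⟨z, hzg, hzD⟩
      exact hgood ⟨g₀, hg₀, z, hzg, hzD⟩
    obtain ⟨l, hc, hh, hl⟩ := hrel g₀ g₁
    cases l with
    | nil => simp at hh
    | cons a tl =>
      obtain rfl : g₀ = a := by
        have : a = g₀ := by simpa using hh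
        exact this.symm
      have hg₁mem : g₁ ∈ g₀ :: tl := mem_of_getLast?_eq hl
      exact claim2 tl g₀ hc hg₀avoid g₁ hg₁mem ⟨y₀, hg₁, hy₀D⟩

/-- one chain list containing all members of `ws` -/
lemma exists_chain_containing
    (hd : ∀ (g : G) (a b : T), dist (g • a) (g • b) = dist a b)
    (hJ : IsNondegSeg J)
    (hrel : ∀ g h : G, chRel J g h) :
    ∀ ws : List G, ∃ l : List G, l ≠ [] ∧ List.Chain' (chainRel J) l ∧ ∀ w ∈ ws, w ∈ l := by
  intro ws
  induction ws with
  | nil => exact ⟨[1], by simp, List.isChain_singleton 1, by simp⟩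
  | cons w ws ih =>
    obtain ⟨l, hlne, hlc, hlmem⟩ := ih
    cases l with
    | nil => exact absurd rfl hlne
    | cons c l'' =>
      obtain ⟨lb, hbc, hbh, hbl⟩ := hrel w c
      refine ⟨lb ++ (c :: l''), ?_, ?_, ?_⟩
      · simp
      · refine hbc.append hlc ?_
        intro p hp q hq
        rw [hbl, Option.mem_some_iff] at hp
        have hqc : c = q := by simpa using hq
        rw [← hp, ← hqc]
        exact chainRel_self hd hJ c
      · intro v hv
        rcases List.mem_cons.1 hv with rfl | hv'
        · exact List.mem_append_left _ (mem_of_head?_eq hbh)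
        · exact List.mem_append_right _ (hlmem v hv')

/-- convert a finite set of translates to a chain as in the definition of
indecomposability -/
lemma assemble_chain (htree : IsRTree T)
    (hd : ∀ (g : G) (a b : T), dist (g • a) (g • b) = dist a b)
    (hJ : IsNondegSeg J)
    (hrel : ∀ g h : G, chRel J g h) (ws : List G) :
    ∃ (n : ℕ) (u : Fin (n + 1) → G),
      (∀ w ∈ ws, w • J ⊆ ⋃ i, u i • J) ∧
      ∀ i : Fin n, IsNondegSeg (u i.castSucc • J ∩ u i.succ • J) := by
  obtain ⟨l, hlne, hlc, hlmem⟩ := exists_chain_containing hd hJ hrel ws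
  have hlen : 0 < l.length := List.length_pos_iff.2 hlne
  refine ⟨l.length - 1, fun i => l.get ⟨i.1, by omega⟩, ?_, ?_⟩
  · intro w hw
    obtain ⟨⟨k, hk⟩, hget⟩ := List.mem_iff_get.1 (hlmem w hw)
    intro x hx
    refine mem_iUnion.2 ⟨⟨k, by omega⟩, ?_⟩
    rw [← hget] at hx
    simpa using hx
  · intro i
    have hi : i.1 < l.length - 1 := i.2
    have hR := List.isChain_iff_getElem.1 hlc i.1 (by omega)
    have hcast : (⟨i.1, by omega⟩ : Fin l.length) = ⟨i.castSucc.1, by omega⟩ := rfl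
    apply inter_nondeg htree (smul_nondeg hd hJ _) (smul_nondeg hd hJ _)
    have h1 : (i.castSucc.1 : ℕ) = i.1 := rfl
    have h2 : (i.succ.1 : ℕ) = i.1 + 1 := rfl
    convert hR using 3
    exact Iff.rfl
  
end RT6

end RTree

set_option maxHeartbeats 1000000 in
/-- An isometric action of `F_N` on an ℝ-tree is indecomposable if and only if there is no
transverse family for the action. -/
theorem indecomposable_iff_no_transverse_family
    (N : ℕ) (hN : 2 ≤ N) (T : Type*) [MetricSpace T] [MulAction (FN N) T]
    (htree : IsRTree T) (hiso : IsIsometricAction N T) :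
    IsIndecomposable N T ↔ ¬ ∃ 𝒯 : Set (Set T), IsTransverseFamily N T 𝒯 := by
  classical
  haveI : Countable (FN N) := FreeGroup.toWord_injective.countable
  have hd : ∀ (g : FN N) (a b : T), dist (g • a) (g • b) = dist a b :=
    fun g a b => (hiso g).dist_eq a b
  constructor
  · rintro hind ⟨𝒯, h𝒯ne, hmem, hinv, htrans⟩
    obtain ⟨S, hS⟩ := h𝒯ne
    obtain ⟨⟨hSne, hSconv⟩, hSnt, hSuniv⟩ := hmem S hS
    obtain ⟨x, hxS, y, hyS, hxy⟩ := hSnt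
    obtain ⟨z, hzS⟩ : ∃ z, z ∉ S := by
      by_contra h
      push_neg at h
      exact hSuniv (Set.eq_univ_of_forall h)
    have hJ : IsNondegSeg (seg x y) := ⟨x, y, hxy, rfl⟩
    have hJS : seg x y ⊆ S := hSconv x hxS y hyS
    have key : ∀ w m', w ∈ S → m' ∈ S → m' ∈ seg w z → m' ≠ w → False := by
      intro w m' hwS hm'S hm'seg hm'w
      have hwz : w ≠ z := fun h => hzS (h ▸ hwS)
      have hI : IsNondegSeg (seg w z) := ⟨w, z, hwz, rfl⟩
      obtain ⟨n, u, hcov, hover⟩ := hind (seg w z) (seg x y) hI hJ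
      have hallS : ∀ i : Fin (n + 1), u i • S = u 0 • S := by
        intro i
        induction i using Fin.induction with
        | zero => rfl
        | succ i ih =>
          have hnt : (u i.castSucc • S ∩ u i.succ • S).Nontrivial :=
            (hover i).nontrivial.mono
              (Set.inter_subset_inter (Set.smul_set_mono hJS) (Set.smul_set_mono hJS))
          have heq : u i.castSucc • S = u i.succ • S := by
            by_contra hne
            exact (Set.not_subsingleton_iff.2 hnt)
              (htrans _ (hinv _ S hS) _ (hinv _ S hS) hne)
          rw [← heq]
          exact ih
      have hsub : seg w z ⊆ u 0 • S := by
        intro t ht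
        obtain ⟨i, hti⟩ := Set.mem_iUnion.1 (hcov ht)
        have h2 : t ∈ u i • S := Set.smul_set_mono hJS hti
        rwa [hallS i] at h2
      have hSeq : S = u 0 • S := by
        by_contra hne
        refine (Set.not_subsingleton_iff.2 ?_) (htrans S hS _ (hinv _ S hS) hne)
        exact ⟨m', ⟨hm'S, hsub hm'seg⟩, w, ⟨hwS, hsub (left_mem_seg w z)⟩, hm'w⟩
      apply hzS
      rw [hSeq]
      exact hsub (right_mem_seg w z)
    obtain ⟨m, hmxy, hmxz, hmyz, _⟩ := exists_median htree x y z
    by_cases hmx : m = x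
    · exact key y x hyS hxS (hmx ▸ hmyz) hxy
    · exact key x m hxS (hJS hmxy) hmxz hmx
  · intro hno I J0 hI hJ0
    obtain ⟨a, b, hab, rfl⟩ := hJ0
    have hJ : IsNondegSeg (seg a b) := ⟨a, b, hab, rfl⟩
    by_cases hall : ∀ g : FN N, Ycl (seg a b) g = Set.univ
    · -- single class: build the covering chain
      have hrel : ∀ g h : FN N, chRel (seg a b) g h := by
        intro g h
        apply chRel_of_nontrivial_inter htree hd hJ
        rw [hall g, hall h, Set.univ_inter]
        exact ⟨a, trivial, b, trivial, hab⟩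
      have hcov : ∀ x : T, ∃ h : FN N, x ∈ h • seg a b := by
        intro x
        have hx : x ∈ Ycl (seg a b) (1 : FN N) := by rw [hall]; trivial
        simp only [Ycl, Set.mem_iUnion] at hx
        obtain ⟨h, _, hxh⟩ := hx
        exact ⟨h, hxh⟩
      obtain ⟨c, d, hcd, rfl⟩ := hI
      obtain ⟨f, hf⟩ := htree.exists_geo c d
      set L := dist c d with hLdef
      have hL0 : 0 < L := dist_pos.2 hcd
      have h0Icc : (0:ℝ) ∈ Set.Icc (0:ℝ) L := ⟨le_refl _, hL0.le⟩
      have hLIcc : L ∈ Set.Icc (0:ℝ) L := ⟨hL0.le, le_refl _⟩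
      have hloc : ∀ t : ↥(Set.Icc (0:ℝ) L), ∃ (lo hi : ℝ) (g h : FN N),
          lo < t.1 ∧ t.1 < hi ∧
          f '' Set.Icc (max lo 0) t.1 ⊆ g • seg a b ∧
          f '' Set.Icc t.1 (min hi L) ⊆ h • seg a b := by
        rintro ⟨t, htIcc⟩
        have hleft : ∃ (lo : ℝ) (g : FN N), lo < t ∧
            f '' Set.Icc (max lo 0) t ⊆ g • seg a b := by
          rcases eq_or_lt_of_le htIcc.1 with h0 | h0
          · obtain ⟨g, hg⟩ := hcov (f t)
            refine ⟨t - 1, g, by linarith, ?_⟩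
            rintro _ ⟨s, hs, rfl⟩
            have hs0 : s = t := by
              refine le_antisymm hs.2 ?_
              rw [← h0]
              exact le_trans (le_max_right _ _) hs.1
            rw [hs0]; exact hg
          · have hne : f t ≠ f 0 := by
              intro h
              have := hf.injOn htIcc h0Icc h
              linarith
            obtain ⟨g, m, hm_ne, hm_seg, hm_sub⟩ :=
              germ_exists htree hd hJ hrel hcov (f t) (f 0) hne
            have hseg_eq : seg (f t) (f 0) = f '' Set.Icc 0 t := by
              rw [seg_comm]
              exact hf.seg_sub_eq htree h0Icc htIcc htIcc.1
            rw [hseg_eq] at hm_seg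
            obtain ⟨r, hr, rfl⟩ := hm_seg
            have hrt : r < t := lt_of_le_of_ne hr.2 (fun h => hm_ne (by rw [h]))
            refine ⟨r, g, hrt, ?_⟩
            rw [max_eq_left hr.1]
            have himg : f '' Set.Icc r t = seg (f r) (f t) :=
              (hf.seg_sub_eq htree ⟨hr.1, le_trans hr.2 htIcc.2⟩ htIcc hr.2).symm
            rw [himg, seg_comm]
            exact hm_sub
        have hright : ∃ (hi : ℝ) (h : FN N), t < hi ∧
            f '' Set.Icc t (min hi L) ⊆ h • seg a b := by
          rcases eq_or_lt_of_le htIcc.2 with hL' | hL'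
          · obtain ⟨g, hg⟩ := hcov (f t)
            refine ⟨L + 1, g, by linarith, ?_⟩
            rintro _ ⟨s, hs, rfl⟩
            have hs0 : s = t := by
              refine le_antisymm ?_ hs.1
              rw [hL']
              exact le_trans hs.2 (min_le_right _ _)
            rw [hs0]; exact hg
          · have hne : f t ≠ f L := by
              intro h
              have := hf.injOn htIcc hLIcc h
              linarith
            obtain ⟨g, m, hm_ne, hm_seg, hm_sub⟩ :=
              germ_exists htree hd hJ hrel hcov (f t) (f L) hne
            have hseg_eq : seg (f t) (f L) = f '' Set.Icc t L :=
              hf.seg_sub_eq htree htIcc hLIcc htIcc.2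
            rw [hseg_eq] at hm_seg
            obtain ⟨r, hr, rfl⟩ := hm_seg
            have hrt : t < r := lt_of_le_of_ne hr.1 (fun h => hm_ne (by rw [← h]))
            refine ⟨r, g, hrt, ?_⟩
            rw [min_eq_left hr.2]
            have himg : f '' Set.Icc t r = seg (f t) (f r) :=
              (hf.seg_sub_eq htree htIcc ⟨le_trans htIcc.1 hr.1, hr.2⟩ hr.1).symm
            rw [himg]
            exact hm_sub
        obtain ⟨lo, g, hlo, hsubl⟩ := hleft
        obtain ⟨hi, h, hhi, hsubr⟩ := hright
        exact ⟨lo, hi, g, h, hlo, hhi, hsubl, hsubr⟩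
      choose lo hi gg hh h1 h2 h3 h4 using hloc
      obtain ⟨sfin, hsfin⟩ := isCompact_Icc.elim_finite_subcover
        (fun t : ↥(Set.Icc (0:ℝ) L) => Set.Ioo (lo t) (hi t))
        (fun t => isOpen_Ioo)
        (by
          intro τ hτ
          refine Set.mem_iUnion.2 ⟨⟨τ, hτ⟩, ?_⟩
          exact ⟨h1 ⟨τ, hτ⟩, h2 ⟨τ, hτ⟩⟩)
      set ws : List (FN N) := sfin.toList.flatMap (fun t => [gg t, hh t]) with hws
      obtain ⟨n, u, hcovU, hover⟩ := assemble_chain htree hd hJ hrel ws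
      refine ⟨n, u, ?_, hover⟩
      rw [hf.seg_eq htree]
      rintro _ ⟨τ, hτ, rfl⟩
      have hτcov := hsfin hτ
      simp only [Set.mem_iUnion] at hτcov
      obtain ⟨t, hts, hτIoo⟩ := hτcov
      rcases le_or_gt τ t.1 with hle | hlt
      · have hmem : f τ ∈ gg t • seg a b :=
          h3 t ⟨τ, ⟨max_le hτIoo.1.le hτ.1, hle⟩, rfl⟩
        have hwsg : gg t ∈ ws := by
          rw [hws]
          exact List.mem_flatMap.2 ⟨t, Finset.mem_toList.2 hts, by simp⟩
        exact hcovU (gg t) hwsg hmem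
      · have hmem : f τ ∈ hh t • seg a b :=
          h4 t ⟨τ, ⟨hlt.le, le_min hτIoo.2.le hτ.2⟩, rfl⟩
        have hwsh : hh t ∈ ws := by
          rw [hws]
          exact List.mem_flatMap.2 ⟨t, Finset.mem_toList.2 hts, by simp⟩
        exact hcovU (hh t) hwsh hmem
    · -- some class union is proper: build a transverse family
      push_neg at hall
      obtain ⟨g₀, hg₀⟩ := hall
      exfalso
      apply hno
      refine ⟨{S | (∃ g : FN N, S = Ycl (seg a b) g) ∧ S ≠ Set.univ}, ?_, ?_, ?_, ?_⟩
      · exact ⟨Ycl (seg a b) g₀, ⟨g₀, rfl⟩, hg₀⟩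
      · rintro S ⟨⟨g, rfl⟩, hSuniv⟩
        refine ⟨⟨?_, Ycl_convex htree hd hJ g⟩, ?_, hSuniv⟩
        · obtain ⟨p, hp⟩ := (smul_nondeg hd hJ g).nonempty
          exact ⟨p, self_subset_Ycl g hp⟩
        · exact (smul_nondeg hd hJ g).nontrivial.mono (self_subset_Ycl g)
      · rintro v S ⟨⟨g, rfl⟩, hSuniv⟩
        rw [Ycl_smul]
        refine ⟨⟨v * g, rfl⟩, ?_⟩
        intro h
        apply hSuniv
        have h2 : v⁻¹ • Ycl (seg a b) (v * g) = v⁻¹ • (Set.univ : Set T) := by rw [h]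
        rwa [Ycl_smul, inv_mul_cancel_left, Set.smul_set_univ] at h2
      · rintro S ⟨⟨g, rfl⟩, _⟩ S' ⟨⟨g', rfl⟩, _⟩ hne
        by_contra hns
        rw [Set.not_subsingleton_iff] at hns
        exact hne (Ycl_eq_of_chRel hd hJ (chRel_of_nontrivial_inter htree hd hJ hns))
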